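/- arXiv:1810.01167 — 6 statements merged into one kernel-verified Lean document; each statement's English description precedes it below -/
import Mathlib

section
/- Let (X,d) be a compact metric space and F = {f₁,…,f_k} a finite family of continuous surjective self-maps of X, with iterates ω_n as below and f = f_k∘f_{k-1}∘⋯∘f₁. Then the non-autonomous system (X,F) is equicontinuous if and only if the autonomous system (X,f) is equicontinuous; that is, (∀ε>0 ∃δ>0 such that d(x,y)<δ implies d(ω_n(x),ω_n(y))<ε for all n∈ℕ and all x,y∈X) holds if and only if (∀ε>0 ∃δ>0 such that d(x,y)<δ implies d(fⁿ(x),fⁿ(y))<ε for all n∈ℕ and all x,y∈X). -/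
open Filter Metric Set Function

/-- The `n`-th iterate `ω_n` of the non-autonomous system generated by the finite family
`f 0, f 1, …, f k` applied cyclically: `ω_0 = id` and `ω_{n+1} = f (n % (k+1)) ∘ ω_n`,
so that `ω_n = f_{((n-1) mod (k+1)) + 1} ∘ ⋯ ∘ f_2 ∘ f_1` in the paper's (1-based) notation.
The induced autonomous map `f = f_k ∘ ⋯ ∘ f_1` is `omegaIt f (k+1)`. -/
def omegaIt {X : Type*} {k : ℕ} (f : Fin (k + 1) → X → X) : ℕ → X → X
  | 0 => id
  | n + 1 => fun x => f ⟨n % (k + 1), Nat.mod_lt _ (Nat.succ_pos k)⟩ (omegaIt f n x)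

lemma omegaIt_continuous {X : Type*} [TopologicalSpace X] {k : ℕ} (f : Fin (k + 1) → X → X)
    (hc : ∀ i, Continuous (f i)) (n : ℕ) : Continuous (omegaIt f n) := by
  induction n with
  | zero => exact continuous_id
  | succ n ih => exact (hc _).comp ih

lemma omegaIt_add {X : Type*} {k : ℕ} (f : Fin (k + 1) → X → X) (m j : ℕ) (x : X) :
    omegaIt f ((k + 1) * m + j) x = omegaIt f j (omegaIt f ((k + 1) * m) x) := by
  induction j with
  | zero => rfl
  | succ j ih =>
    show f ⟨((k + 1) * m + j) % (k + 1), _⟩ _ = f ⟨j % (k + 1), _⟩ _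
    rw [show omegaIt f (((k + 1) * m).add j) x = omegaIt f j (omegaIt f ((k + 1) * m) x) from ih]
    exact congrFun (congrArg f (Fin.ext (Nat.mul_add_mod (k + 1) m j))) _

lemma omegaIt_mul {X : Type*} {k : ℕ} (f : Fin (k + 1) → X → X) (m : ℕ) (x : X) :
    omegaIt f ((k + 1) * m) x = (omegaIt f (k + 1))^[m] x := by
  induction m with
  | zero => rfl
  | succ m ih =>
    rw [Nat.mul_succ, omegaIt_add, ih, Function.iterate_succ_apply']

/-- the non-autonomous system `(X, F)` is equicontinuous iff the autonomous
system `(X, f)`, `f = f_k ∘ ⋯ ∘ f_1`, is equicontinuous. -/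
theorem equicontinuous_nonautonomous_iff_autonomous
    {X : Type*} [MetricSpace X] [CompactSpace X] {k : ℕ} (f : Fin (k + 1) → X → X)
    (hc : ∀ i, Continuous (f i)) (hs : ∀ i, Function.Surjective (f i)) :
    (∀ ε > (0 : ℝ), ∃ δ > (0 : ℝ), ∀ x y : X, dist x y < δ →
        ∀ n : ℕ, dist (omegaIt f n x) (omegaIt f n y) < ε) ↔
    (∀ ε > (0 : ℝ), ∃ δ > (0 : ℝ), ∀ x y : X, dist x y < δ →
        ∀ n : ℕ, dist ((omegaIt f (k + 1))^[n] x) ((omegaIt f (k + 1))^[n] y) < ε) := by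
  constructor
  · intro h ε hε
    obtain ⟨δ, hδ, hδ'⟩ := h ε hε
    exact ⟨δ, hδ, fun x y hxy n => by
      rw [← omegaIt_mul, ← omegaIt_mul]; exact hδ' x y hxy _⟩
  · intro h ε hε
    -- uniform continuity of each ω_j, j ≤ k
    choose δf hδf hδf' using fun j : Fin (k + 1) =>
      Metric.uniformContinuous_iff.mp
        (CompactSpace.uniformContinuous_of_continuous
          (omegaIt_continuous f hc j.1)) ε hε
    set η : ℝ := Finset.univ.inf' Finset.univ_nonempty δf with hηdef
    have hη : 0 < η := by
      rw [hηdef, Finset.lt_inf'_iff]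
      exact fun j _ => hδf j
    obtain ⟨δ, hδ, hδ'⟩ := h η hη
    refine ⟨δ, hδ, fun x y hxy n => ?_⟩
    have hn : (k + 1) * (n / (k + 1)) + n % (k + 1) = n := by
      exact Nat.div_add_mod n (k + 1)
    have hj : n % (k + 1) < k + 1 := Nat.mod_lt _ (Nat.succ_pos k)
    set j : Fin (k + 1) := ⟨n % (k + 1), hj⟩ with hjdef
    have hx := omegaIt_add f (n / (k + 1)) (n % (k + 1)) x
    have hy := omegaIt_add f (n / (k + 1)) (n % (k + 1)) y
    rw [hn] at hx hy
    rw [hx, hy, omegaIt_mul, omegaIt_mul]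
    have hd : dist ((omegaIt f (k + 1))^[n / (k + 1)] x)
        ((omegaIt f (k + 1))^[n / (k + 1)] y) < δf j := by
      have := hδ' x y hxy (n / (k + 1))
      exact lt_of_lt_of_le this (Finset.inf'_le _ (Finset.mem_univ j))
    exact hδf' j hd
end

section
/- Let (X,d) be a compact connected metric space and f : X → X a continuous surjective map. Then (X,f) is minimal (every point has dense orbit under f) if and only if for every m∈ℕ the system (X,fᵐ) is minimal (every point has dense orbit under fᵐ). -/
open Filter Metric Set Function

theorem totally_min_aux
    {X : Type*} [MetricSpace X] [CompactSpace X] [ConnectedSpace X]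
    (f : X → X) (hc : Continuous f)
    (hmin : ∀ x : X, Dense (Set.range fun n : ℕ => f^[n] x))
    (m : ℕ) (hm : 0 < m) (x : X) :
    Dense (Set.range fun n : ℕ => (f^[m])^[n] x) := by
  classical
  set g := f^[m] with hgdef
  have hgc : Continuous g := hc.iterate m
  have hcomm : ∀ (i : ℕ) (a : X), g (f^[i] a) = f^[i] (g a) := by
    intro i a
    simp only [hgdef, ← Function.iterate_add_apply, Nat.add_comm]
  set S : Set (Set X) := {A | A.Nonempty ∧ IsClosed A ∧ MapsTo g A A} with hS
  obtain ⟨M, -, hMmin⟩ : ∃ M, M ⊆ univ ∧ Minimal (· ∈ S) M := by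
    apply zorn_superset_nonempty S
    · intro c hcS hchain hcne
      refine ⟨⋂₀ c, ⟨?_, ?_, ?_⟩, fun s hs => sInter_subset_of_mem hs⟩
      · haveI : Nonempty c := hcne.to_subtype
        exact IsCompact.nonempty_sInter_of_directed_nonempty_isCompact_isClosed
          (fun a ha b hb => (hchain.total ha hb).elim
            (fun h => ⟨a, ha, Subset.rfl, h⟩) (fun h => ⟨b, hb, h, Subset.rfl⟩))
          (fun U hU => (hcS hU).1)
          (fun U hU => (hcS hU).2.1.isCompact) (fun U hU => (hcS hU).2.1)
      · exact isClosed_sInter fun s hs => (hcS hs).2.1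
      · intro a ha
        rw [mem_sInter] at ha ⊢
        exact fun s hs => (hcS hs).2.2 (ha s hs)
    · exact ⟨univ_nonempty, isClosed_univ, mapsTo_univ _ _⟩
  have hMS : M ∈ S := hMmin.1
  obtain ⟨hMne, hMcl, hMinv⟩ := hMS
  -- the iterated images of M
  have hAiS : ∀ i : ℕ, (f^[i] '' M) ∈ S := by
    intro i
    refine ⟨hMne.image _, (hMcl.isCompact.image (hc.iterate i)).isClosed, ?_⟩
    rintro y ⟨a, ha, rfl⟩
    exact ⟨g a, hMinv ha, (hcomm i a).symm⟩
  have hAimin : ∀ i : ℕ, Minimal (· ∈ S) (f^[i] '' M) := by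
    intro i
    refine ⟨hAiS i, ?_⟩
    intro B hB hBsub
    obtain ⟨hBne, hBcl, hBinv⟩ := hB
    have hCS : (M ∩ f^[i] ⁻¹' B) ∈ S := by
      refine ⟨?_, hMcl.inter (hBcl.preimage (hc.iterate i)), ?_⟩
      · obtain ⟨b, hb⟩ := hBne
        obtain ⟨a, haM, rfl⟩ := hBsub hb
        exact ⟨a, haM, hb⟩
      · rintro a ⟨haM, haB⟩
        refine ⟨hMinv haM, ?_⟩
        show f^[i] (g a) ∈ B
        rw [← hcomm i a]
        exact hBinv haB
    have := hMmin.2 hCS inter_subset_left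
    intro y hy
    obtain ⟨a, haM, rfl⟩ := hy
    exact (this haM).2
  -- the union of the images covers X
  have hUuniv : (⋃ i ∈ Finset.range m, f^[i] '' M) = univ := by
    set U := ⋃ i ∈ Finset.range m, f^[i] '' M with hU
    have hUcl : IsClosed U := isClosed_biUnion_finset fun i _ => (hAiS i).2.1
    have hUinv : ∀ y ∈ U, f y ∈ U := by
      intro y hy
      simp only [hU, mem_iUnion, Finset.mem_range] at hy ⊢
      obtain ⟨i, hi, a, haM, rfl⟩ := hy
      rcases eq_or_lt_of_le (Nat.succ_le_of_lt hi) with h | h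
      · refine ⟨0, hm, ?_⟩
        simp only [Function.iterate_zero, image_id]
        have he : f (f^[i] a) = f^[m] a := by rw [← h]; exact (Function.iterate_succ_apply' f i a).symm
        rw [he]
        exact hMinv haM
      · exact ⟨i + 1, h, a, haM, Function.iterate_succ_apply' f i a⟩
    obtain ⟨x0, hx0⟩ := hMne
    have hx0U : x0 ∈ U := by
      simp only [hU, mem_iUnion, Finset.mem_range]
      exact ⟨0, hm, by simpa using hx0⟩
    have horb : ∀ n : ℕ, f^[n] x0 ∈ U := by
      intro n
      induction n with
      | zero => simpa using hx0U
      | succ k ih => rw [Function.iterate_succ_apply']; exact hUinv _ ih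
    have : range (fun n : ℕ => f^[n] x0) ⊆ U := by
      rintro _ ⟨n, rfl⟩; exact horb n
    have := (hmin x0).mono this  -- Dense U? need Dense of superset
    exact eq_univ_of_univ_subset (by
      rw [← hUcl.closure_eq]
      exact this.closure_eq ▸ subset_rfl)
  -- M is clopen
  have hdisj : ∀ i : ℕ, f^[i] '' M ≠ M → f^[i] '' M ∩ M = ∅ := by
    intro i hne
    by_contra h
    have hne' : (f^[i] '' M ∩ M).Nonempty := nonempty_iff_ne_empty.mpr h
    have hIS : (f^[i] '' M ∩ M) ∈ S := by
      refine ⟨hne', (hAiS i).2.1.inter hMcl, ?_⟩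
      rintro a ⟨h1, h2⟩
      exact ⟨(hAiS i).2.2 h1, hMinv h2⟩
    have e1 : M ⊆ f^[i] '' M ∩ M := hMmin.2 hIS inter_subset_right
    have e2 : f^[i] '' M ⊆ f^[i] '' M ∩ M := (hAimin i).2 hIS inter_subset_left
    exact hne (Subset.antisymm (fun a ha => (e2 ha).2) (fun a ha => (e1 ha).1))
  have hcompl : Mᶜ = ⋃ i ∈ Finset.range m, (if f^[i] '' M = M then (∅ : Set X) else f^[i] '' M) := by
    ext y
    simp only [mem_compl_iff, mem_iUnion, Finset.mem_range]
    constructor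
    · intro hy
      have : y ∈ ⋃ i ∈ Finset.range m, f^[i] '' M := hUuniv ▸ mem_univ y
      simp only [mem_iUnion, Finset.mem_range] at this
      obtain ⟨i, hi, hyi⟩ := this
      refine ⟨i, hi, ?_⟩
      rw [if_neg]
      · exact hyi
      · intro h; exact hy (h ▸ hyi)
    · rintro ⟨i, hi, hyi⟩
      by_cases h : f^[i] '' M = M
      · rw [if_pos h] at hyi; exact absurd hyi (notMem_empty y)
      · rw [if_neg h] at hyi
        intro hyM
        have := hdisj i h
        exact absurd (mem_inter hyi hyM) (this ▸ notMem_empty y)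
  have hMopen : IsOpen M := by
    rw [← isClosed_compl_iff, hcompl]
    refine isClosed_biUnion_finset fun i _ => ?_
    split
    · exact isClosed_empty
    · exact (hAiS i).2.1
  have hMuniv : M = univ := by
    rcases isClopen_iff.mp ⟨hMcl, hMopen⟩ with h | h
    · exact absurd (h ▸ hMne) (by simp)
    · exact h
  -- conclude minimality of g
  have hBS : closure (range fun n : ℕ => g^[n] x) ∈ S := by
    refine ⟨⟨x, subset_closure ⟨0, rfl⟩⟩, isClosed_closure, ?_⟩
    intro a ha
    have h1 : g '' (range fun n : ℕ => g^[n] x) ⊆ range fun n : ℕ => g^[n] x := by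
      rintro _ ⟨_, ⟨n, rfl⟩, rfl⟩
      exact ⟨n + 1, Function.iterate_succ_apply' g n x⟩
    exact closure_mono h1 (image_closure_subset_closure_image hgc (mem_image_of_mem g ha))
  have := hMmin.2 hBS (hMuniv ▸ subset_univ _)
  rw [hMuniv] at this
  rw [dense_iff_closure_eq]
  exact eq_univ_of_univ_subset this

/-- for a continuous surjective self-map `f` of a compact connected metric
space, `(X, f)` is minimal iff `(X, fᵐ)` is minimal for every `m ∈ ℕ`, `m ≥ 1`. -/
theorem minimal_iff_forall_iterate_minimal
    {X : Type*} [MetricSpace X] [CompactSpace X] [ConnectedSpace X]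
    (f : X → X) (hc : Continuous f) (hs : Function.Surjective f) :
    (∀ x : X, Dense (Set.range fun n : ℕ => f^[n] x)) ↔
    (∀ m : ℕ, 0 < m → ∀ x : X, Dense (Set.range fun n : ℕ => (f^[m])^[n] x)) := by
  constructor
  · exact fun h m hm x => totally_min_aux f hc h m hm x
  · intro h x
    have := h 1 one_pos x
    simpa using this
end

section
/- Let X = S₁ ∪ S₂ ⊂ ℂ, where S_r = {r·e^{iθ} : 0 ≤ θ ≤ 2π} is the circle of radius r centered at the origin (r = 1,2), and let α ∈ ℝ be an irrational multiple of 2π. Define continuous maps f₁, f₂ : X → X by: f₁(r·e^{iθ}) = 2·e^{i(θ+α)} if r = 1 and f₁(r·e^{iθ}) = e^{i(θ+2α)} if r = 2; f₂(r·e^{iθ}) = 2·e^{i(θ+2α)} if r = 1 and f₂(r·e^{iθ}) = e^{i(θ+α)} if r = 2. Then the non-autonomous system (X,{f₁,f₂}) is minimal (every point x∈X has dense orbit {ω_n(x) : n∈ℕ}), but the autonomous system (X, f₂∘f₁) is not minimal. -/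
/-!
Write `g = f₂ ∘ f₁`, so that `ω_{2m} = gᵐ` and `ω_{2m+1} = f₁ ∘ gᵐ`. On the circle of
radius `r` the map `g` is the rotation by `2rα`, an irrational multiple of `2π`, so every
`g`-orbit is dense in its own circle but never leaves it; hence `g` is not minimal. Since `f₁`
is a continuous surjection exchanging the two circles, the odd iterates are dense in the other
circle, and every orbit of the non-autonomous system is dense in `X`.
-/

open Filter Metric Set Function

/-- The subset `S₁ ∪ S₂` of ℂ: the union of the circles of radius 1 and 2 about 0. -/
def TwoCircles : Set ℂ := {z : ℂ | ‖z‖ = 1 ∨ ‖z‖ = 2}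

/-- `f₁`: on the unit circle, `r·e^{iθ} ↦ 2·e^{i(θ+α)}`; on the circle of radius 2,
`r·e^{iθ} ↦ e^{i(θ+2α)}`. -/
noncomputable def F1 (α : ℝ) (z : TwoCircles) : TwoCircles :=
  if h : ‖z.1‖ = 1 then
    ⟨2 * z.1 * Complex.exp ((α : ℂ) * Complex.I), Or.inr (by
      simp [map_mul, Complex.norm_exp_ofReal_mul_I, Complex.norm_exp, h])⟩
  else
    ⟨z.1 / 2 * Complex.exp (((2 * α : ℝ) : ℂ) * Complex.I), Or.inl (by
      have h2 : ‖z.1‖ = 2 := z.2.resolve_left h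
      simp [map_mul, map_div₀, Complex.norm_exp_ofReal_mul_I, Complex.norm_exp, h2])⟩

/-- `f₂`: on the unit circle, `r·e^{iθ} ↦ 2·e^{i(θ+2α)}`; on the circle of radius 2,
`r·e^{iθ} ↦ e^{i(θ+α)}`. -/
noncomputable def F2 (α : ℝ) (z : TwoCircles) : TwoCircles :=
  if h : ‖z.1‖ = 1 then
    ⟨2 * z.1 * Complex.exp (((2 * α : ℝ) : ℂ) * Complex.I), Or.inr (by
      simp [map_mul, Complex.norm_exp_ofReal_mul_I, Complex.norm_exp, h])⟩
  else
    ⟨z.1 / 2 * Complex.exp ((α : ℂ) * Complex.I), Or.inl (by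
      have h2 : ‖z.1‖ = 2 := z.2.resolve_left h
      simp [map_mul, map_div₀, Complex.norm_exp_ofReal_mul_I, Complex.norm_exp, h2])⟩


open Complex

section CyclicPair

variable {X : Type*}

theorem omegaIt_two_mul_add_one (f₁ f₂ : X → X) (m : ℕ) (x : X) :
    omegaIt ![f₁, f₂] (2 * m + 1) x = f₁ (omegaIt ![f₁, f₂] (2 * m) x) := by
  simp [omegaIt]

theorem omegaIt_two_mul (f₁ f₂ : X → X) (m : ℕ) :
    omegaIt ![f₁, f₂] (2 * m) = (f₂ ∘ f₁)^[m] := by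
  induction m with
  | zero => rfl
  | succ m ih =>
    ext x
    rw [iterate_succ_apply', ← ih, comp_apply, ← omegaIt_two_mul_add_one f₁ f₂ m x,
      mul_add_one]
    simp [omegaIt, Nat.add_mod]

theorem dense_range_omegaIt_of_subset_closure [TopologicalSpace X] {f₁ f₂ : X → X}
    (hf₁ : Continuous f₁) {x : X} {A : Set X}
    (hA : A ⊆ closure (range fun m => (f₂ ∘ f₁)^[m] x)) (hcover : A ∪ f₁ '' A = univ) :
    Dense (range fun n => omegaIt ![f₁, f₂] n x) := by
  have heven : range (fun m => (f₂ ∘ f₁)^[m] x) ⊆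
      range fun n => omegaIt ![f₁, f₂] n x := by
    rintro _ ⟨m, rfl⟩
    exact ⟨2 * m, congrFun (omegaIt_two_mul f₁ f₂ m) x⟩
  have hodd : f₁ '' range (fun m => (f₂ ∘ f₁)^[m] x) ⊆
      range fun n => omegaIt ![f₁, f₂] n x := by
    rintro _ ⟨_, ⟨m, rfl⟩, rfl⟩
    exact ⟨2 * m + 1, by simp only [omegaIt_two_mul_add_one, omegaIt_two_mul]⟩
  intro y
  rcases hcover.symm ▸ mem_univ y with hy | ⟨z, hz, rfl⟩
  · exact closure_mono heven (hA hy)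
  · exact closure_mono hodd (image_closure_subset_closure_image hf₁ ⟨z, hA hz, rfl⟩)

end CyclicPair

open Real in
theorem denseRange_circleExp_pow {β : ℝ} (hβ : Irrational (β / (2 * π))) :
    DenseRange fun n : ℕ => Circle.exp β ^ n := by
  have hzsmul : DenseRange (· • (β : AddCircle (2 * π)) : ℤ → _) :=
    AddCircle.denseRange_zsmul_coe_iff.2 hβ
  have hzpow : DenseRange fun n : ℤ => Circle.exp β ^ n := by
    convert AddCircle.homeomorphCircle'.surjective.denseRange.comp hzsmul
      AddCircle.homeomorphCircle'.continuous using 1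
    ext n : 1
    rw [comp_apply, ← AddCircle.coe_zsmul, AddCircle.homeomorphCircle'_apply_mk, Circle.exp_zsmul]
  exact denseRange_zpow_iff_pow.1 hzpow

open Real in
theorem sphere_subset_closure_range_mul_exp_pow {β : ℝ} (hβ : Irrational (β / (2 * π)))
    (c : ℂ) :
    sphere (0 : ℂ) ‖c‖ ⊆ closure (range fun n : ℕ => c * exp (β * I) ^ n) := by
  have hrange : (range fun n : ℕ => c * exp (β * I) ^ n) =
      (fun u : Circle => c * u) '' range fun n : ℕ => Circle.exp β ^ n := by
    rw [← range_comp]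
    simp [Function.comp_def, Circle.coe_exp]
  intro z hz
  rw [mem_sphere_zero_iff_norm] at hz
  obtain ⟨u, rfl⟩ : ∃ u : Circle, c * u = z := by
    rcases eq_or_ne c 0 with rfl | hc
    · exact ⟨1, by simp_all⟩
    · have hu : ‖z / c‖ = 1 := by rw [norm_div, hz, div_self (norm_ne_zero_iff.2 hc)]
      exact ⟨⟨z / c, mem_sphere_zero_iff_norm.2 hu⟩, mul_div_cancel₀ z hc⟩
  rw [hrange]
  exact image_closure_subset_closure_image (by fun_prop)
    ⟨u, denseRange_circleExp_pow hβ u, rfl⟩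

section TwoCircles

variable (α : ℝ)

theorem coe_F1 (z : TwoCircles) : (F1 α z).1 = if ‖z.1‖ = 1
    then 2 * z.1 * exp (α * I)
    else z.1 / 2 * exp (((2 * α : ℝ) : ℂ) * I) := by
  unfold F1; split_ifs <;> rfl

theorem coe_F2 (z : TwoCircles) : (F2 α z).1 = if ‖z.1‖ = 1
    then 2 * z.1 * exp (((2 * α : ℝ) : ℂ) * I)
    else z.1 / 2 * exp (α * I) := by
  unfold F2; split_ifs <;> rfl

theorem isClopen_setOf_norm_eq_one : IsClopen {z : TwoCircles | ‖z.1‖ = 1} := by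
  have hclosed (r : ℝ) : IsClosed {z : TwoCircles | ‖z.1‖ = r} :=
    isClosed_eq (by fun_prop) continuous_const
  refine ⟨hclosed 1, ?_⟩
  convert (hclosed 2).isOpen_compl using 1
  ext z
  rcases z.2 with h | h <;> simp [h]

theorem continuous_of_coe_eq_ite {g : TwoCircles → TwoCircles} {p q : TwoCircles → ℂ}
    (hp : Continuous p) (hq : Continuous q)
    (hg : ∀ z, (g z).1 = if ‖z.1‖ = 1 then p z else q z) : Continuous g := by
  refine Continuous.subtype_mk ?_ _
  simp_rw [hg]
  refine Continuous.if ?_ (by fun_prop) (by fun_prop)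
  simp [isClopen_setOf_norm_eq_one.frontier_eq]

theorem continuous_F1 : Continuous (F1 α) :=
  continuous_of_coe_eq_ite (hg := coe_F1 α) (by fun_prop) (by fun_prop)

theorem continuous_F2 : Continuous (F2 α) :=
  continuous_of_coe_eq_ite (hg := coe_F2 α) (by fun_prop) (by fun_prop)

theorem norm_F1 (z : TwoCircles) : ‖(F1 α z).1‖ = 3 - ‖z.1‖ := by
  rw [coe_F1]
  rcases z.2 with h | h <;> simp [h, norm_exp] <;> norm_num

theorem norm_F1_ne (z : TwoCircles) : ‖(F1 α z).1‖ ≠ ‖z.1‖ := by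
  rw [norm_F1]
  rcases z.2 with h | h <;> rw [h] <;> norm_num

theorem F1_surjective : Surjective (F1 α) := by
  have hinv (t : ℝ) : exp (((-t : ℝ) : ℂ) * I) * exp (t * I) = 1 := by
    rw [← exp_add]; simp
  intro y
  rcases y.2 with hy | hy
  · refine ⟨⟨2 * y.1 * exp (((-(2 * α) : ℝ) : ℂ) * I), Or.inr ?_⟩, Subtype.ext ?_⟩
    · simp [hy, norm_exp]
    · rw [coe_F1, if_neg (by simp [hy, norm_exp])]
      linear_combination y.1 * hinv (2 * α)
  · refine ⟨⟨y.1 / 2 * exp (((-α : ℝ) : ℂ) * I), Or.inl ?_⟩, Subtype.ext ?_⟩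
    · simp [hy, norm_exp]
    · rw [coe_F1, if_pos (by simp [hy, norm_exp])]
      linear_combination y.1 * hinv α

theorem coe_F2_F1 (z : TwoCircles) :
    (F2 α (F1 α z)).1 = z.1 * exp (((2 * ‖z.1‖ * α : ℝ) : ℂ) * I) := by
  rcases z.2 with h | h
  · rw [coe_F2, if_neg (by rw [norm_F1, h]; norm_num), coe_F1, if_pos h, h,
      show (((2 * 1 * α : ℝ) : ℂ) * I) = α * I + α * I by push_cast; ring,
      exp_add]
    ring
  · rw [coe_F2, if_pos (by rw [norm_F1, h]; norm_num), coe_F1, if_neg (by rw [h]; norm_num), h,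
      show (((2 * 2 * α : ℝ) : ℂ) * I) =
        ((2 * α : ℝ) : ℂ) * I + ((2 * α : ℝ) : ℂ) * I by push_cast; ring,
      exp_add]
    ring

theorem norm_F2_F1 (z : TwoCircles) : ‖(F2 α (F1 α z)).1‖ = ‖z.1‖ := by
  rw [coe_F2_F1, norm_mul, norm_exp_ofReal_mul_I, mul_one]

theorem norm_iterate_F2_comp_F1 (z : TwoCircles) (m : ℕ) :
    ‖((F2 α ∘ F1 α)^[m] z).1‖ = ‖z.1‖ := by
  induction m with
  | zero => rfl
  | succ m ih => rw [iterate_succ_apply', comp_apply, norm_F2_F1, ih]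

theorem coe_iterate_F2_comp_F1 (z : TwoCircles) (m : ℕ) :
    ((F2 α ∘ F1 α)^[m] z).1 = z.1 * exp (((2 * ‖z.1‖ * α : ℝ) : ℂ) * I) ^ m := by
  induction m with
  | zero => simp
  | succ m ih =>
    rw [iterate_succ_apply', comp_apply, coe_F2_F1, norm_iterate_F2_comp_F1, ih, pow_succ,
      mul_assoc]

theorem setOf_norm_eq_subset_closure_orbit (hα : Irrational (α / (2 * Real.pi)))
    (x : TwoCircles) :
    {z : TwoCircles | ‖z.1‖ = ‖x.1‖} ⊆
      closure (range fun m => (F2 α ∘ F1 α)^[m] x) := by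
  have hirr : Irrational (2 * ‖x.1‖ * α / (2 * Real.pi)) := by
    rw [show 2 * ‖x.1‖ * α / (2 * Real.pi) = 2 * ‖x.1‖ * (α / (2 * Real.pi)) by ring]
    rcases x.2 with h | h <;> rw [h]
    · simpa using hα.natCast_mul two_ne_zero
    · simpa [show (2 : ℝ) * 2 = 4 by norm_num] using hα.natCast_mul four_ne_zero
  intro z hz
  rw [closure_subtype, ← range_comp, comp_def]
  simp only [coe_iterate_F2_comp_F1]
  exact sphere_subset_closure_range_mul_exp_pow hirr x.1 (by simpa using hz)

theorem setOf_norm_eq_union_image_F1 (x : TwoCircles) :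
    {z : TwoCircles | ‖z.1‖ = ‖x.1‖} ∪ F1 α '' {z | ‖z.1‖ = ‖x.1‖} = univ := by
  refine eq_univ_of_forall fun y => ?_
  by_cases hy : ‖y.1‖ = ‖x.1‖
  · exact .inl hy
  · obtain ⟨z, rfl⟩ := F1_surjective α y
    refine .inr ⟨z, ?_, rfl⟩
    rw [norm_F1] at hy
    show ‖z.1‖ = ‖x.1‖
    rcases x.2 with hx | hx <;> rcases z.2 with hz | hz <;> grind

theorem not_dense_range_iterate_F2_comp_F1 (x : TwoCircles) :
    ¬ Dense (range fun n => (F2 α ∘ F1 α)^[n] x) := by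
  intro hdense
  have hsub : closure (range fun n => (F2 α ∘ F1 α)^[n] x) ⊆ {z | ‖z.1‖ = ‖x.1‖} := by
    refine closure_minimal ?_ (isClosed_eq (by fun_prop) continuous_const)
    rintro _ ⟨n, rfl⟩
    exact norm_iterate_F2_comp_F1 α x n
  exact norm_F1_ne α x (hsub (hdense (F1 α x)))

end TwoCircles

/-- for `α` an irrational multiple of `2π`, the maps `f₁, f₂` above are
continuous, the non-autonomous system `(X, {f₁, f₂})` is minimal, but the autonomous
system `(X, f₂ ∘ f₁)` is not minimal. -/
theorem twoCircles_nonautonomous_minimal_autonomous_not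
    (α : ℝ) (hα : Irrational (α / (2 * Real.pi))) :
    Continuous (F1 α) ∧ Continuous (F2 α) ∧
    (∀ x : TwoCircles, Dense (Set.range fun n : ℕ => omegaIt ![F1 α, F2 α] n x)) ∧
    ¬ (∀ x : TwoCircles, Dense (Set.range fun n : ℕ => (F2 α ∘ F1 α)^[n] x)) := by
  refine ⟨continuous_F1 α, continuous_F2 α, fun x => ?_, fun hmin => ?_⟩
  · exact dense_range_omegaIt_of_subset_closure (continuous_F1 α)
      (setOf_norm_eq_subset_closure_orbit α hα x) (setOf_norm_eq_union_image_F1 α x)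
  · let one : TwoCircles := ⟨1, .inl norm_one⟩
    exact not_dense_range_iterate_F2_comp_F1 α one (hmin one)
end

section
/- Let (X,d) be a compact metric space and F = {f₁,…,f_k} a finite family of continuous surjective self-maps of X, with iterates ω_n as below and f = f_k∘f_{k-1}∘⋯∘f₁. For any pair of points x,y ∈ X, (x,y) is proximal for the non-autonomous system (X,F), i.e., liminf_{n→∞} d(ω_n(x),ω_n(y)) = 0, if and only if (x,y) is proximal for the autonomous system (X,f), i.e., liminf_{n→∞} d(fⁿ(x),fⁿ(y)) = 0. -/
open Filter Metric Set Function

lemma omegaIt_mul_add {X : Type*} {k : ℕ} (f : Fin (k + 1) → X → X) (m r : ℕ) (x : X) :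
    omegaIt f ((k + 1) * m + r) x = omegaIt f r (omegaIt f ((k + 1) * m) x) := by
  induction r with
  | zero => rfl
  | succ r ih =>
      have h1 : (k + 1) * m + (r + 1) = ((k + 1) * m + r) + 1 := rfl
      rw [h1]
      simp only [omegaIt, ih]
      congr 1
      exact Fin.ext (by simp [Nat.add_mul_mod_self_left, Nat.mul_add_mod])

lemma omegaIt_tail {X : Type*} [TopologicalSpace X] {k : ℕ} (f : Fin (k + 1) → X → X)
    (hc : ∀ i, Continuous (f i)) :
    ∀ j, j ≤ k + 1 → ∃ h : X → X, Continuous h ∧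
      ∀ z, omegaIt f (k + 1) z = h (omegaIt f (k + 1 - j) z) := by
  intro j
  induction j with
  | zero => exact fun _ => ⟨id, continuous_id, fun z => rfl⟩
  | succ j ih =>
      intro hj
      obtain ⟨h, hcont, hh⟩ := ih (Nat.le_of_succ_le hj)
      set r := k + 1 - (j + 1) with hr
      have hrk : r < k + 1 := by omega
      have hsucc : k + 1 - j = r + 1 := by omega
      refine ⟨fun z => h (f ⟨r, hrk⟩ z), (hcont.comp (hc _)), fun z => ?_⟩
      have := hh z
      rw [hsucc] at this
      simp only [omegaIt] at this ⊢
      rw [this]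
      congr 2
      exact Fin.ext (Nat.mod_eq_of_lt hrk)

lemma liminf_eq_zero_iff_frequently {X : Type*} [MetricSpace X] [CompactSpace X]
    (u v : ℕ → X) :
    Filter.liminf (fun n => dist (u n) (v n)) Filter.atTop = 0 ↔
      ∀ ε > 0, ∃ᶠ n in Filter.atTop, dist (u n) (v n) < ε := by
  obtain ⟨C, hC⟩ := Metric.isBounded_iff.mp (isCompact_univ (X := X)).isBounded
  have hblo : IsBoundedUnder (· ≥ ·) atTop (fun n => dist (u n) (v n)) :=
    isBoundedUnder_of ⟨0, fun n => dist_nonneg⟩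
  have hbhi : IsBoundedUnder (· ≤ ·) atTop (fun n => dist (u n) (v n)) :=
    isBoundedUnder_of ⟨C, fun n => hC trivial trivial⟩
  have hcob : IsCoboundedUnder (· ≥ ·) atTop (fun n => dist (u n) (v n)) :=
    hbhi.isCoboundedUnder_ge
  constructor
  · intro h ε hε
    exact frequently_lt_of_liminf_lt hcob (by rw [h]; exact hε)
  · intro h
    refine le_antisymm ?_ (le_liminf_of_le hcob (Eventually.of_forall fun n => dist_nonneg))
    have key : ∀ ε > (0 : ℝ), liminf (fun n => dist (u n) (v n)) atTop ≤ ε := fun ε hε =>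
      liminf_le_of_frequently_le ((h ε hε).mono fun n hn => hn.le) hblo
    exact le_of_forall_pos_le_add (by simpa using key)

/-- `(x, y)` is proximal for the non-autonomous system `(X, F)` iff it is
proximal for the autonomous system `(X, f)`, `f = f_k ∘ ⋯ ∘ f_1`. -/
theorem proximal_nonautonomous_iff_autonomous
    {X : Type*} [MetricSpace X] [CompactSpace X] {k : ℕ} (f : Fin (k + 1) → X → X)
    (hc : ∀ i, Continuous (f i)) (hs : ∀ i, Function.Surjective (f i)) (x y : X) :
    Filter.liminf (fun n : ℕ => dist (omegaIt f n x) (omegaIt f n y)) Filter.atTop = 0 ↔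
    Filter.liminf (fun n : ℕ =>
      dist ((omegaIt f (k + 1))^[n] x) ((omegaIt f (k + 1))^[n] y)) Filter.atTop = 0 := by
  rw [liminf_eq_zero_iff_frequently (fun n => omegaIt f n x) (fun n => omegaIt f n y),
    liminf_eq_zero_iff_frequently (fun n => (omegaIt f (k + 1))^[n] x)
      (fun n => (omegaIt f (k + 1))^[n] y)]
  constructor
  · -- nonautonomous proximal → autonomous proximal
    intro h ε hε
    -- tail maps
    have H : ∀ i : Fin (k + 1), ∃ g : X → X, Continuous g ∧
        ∀ z, omegaIt f (k + 1) z = g (omegaIt f (i : ℕ) z) := by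
      intro i
      obtain ⟨g, hgc, hg⟩ := omegaIt_tail f hc (k + 1 - (i : ℕ)) (by omega)
      have hi : k + 1 - (k + 1 - (i : ℕ)) = (i : ℕ) := by omega
      rw [hi] at hg
      exact ⟨g, hgc, hg⟩
    choose g hgc hg using H
    have Hδ : ∀ i : Fin (k + 1), ∃ δ > (0 : ℝ), ∀ a b : X,
        dist a b < δ → dist (g i a) (g i b) < ε := by
      intro i
      obtain ⟨δ, hδ, hδ'⟩ := Metric.uniformContinuous_iff.mp
        (CompactSpace.uniformContinuous_of_continuous (hgc i)) ε hε
      exact ⟨δ, hδ, fun a b hab => hδ' hab⟩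
    choose δ hδpos hδ using Hδ
    set δ₀ : ℝ := Finset.univ.inf' Finset.univ_nonempty δ with hδ₀
    have hδ₀pos : 0 < δ₀ := by
      rw [hδ₀, Finset.lt_inf'_iff]
      exact fun i _ => hδpos i
    rw [frequently_atTop]
    intro N
    obtain ⟨n, hn, hd⟩ := frequently_atTop.mp (h δ₀ hδ₀pos) ((k + 1) * N)
    set m := n / (k + 1) with hm
    set r := n % (k + 1) with hrdef
    have hrk : r < k + 1 := Nat.mod_lt _ (Nat.succ_pos k)
    have hmn : (k + 1) * m + r = n := Nat.div_add_mod n (k + 1)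
    have hmN : N ≤ m := by
      rw [hm, Nat.le_div_iff_mul_le (Nat.succ_pos k), mul_comm]
      exact hn
    refine ⟨m + 1, by omega, ?_⟩
    set i : Fin (k + 1) := ⟨r, hrk⟩ with hi
    have key : ∀ z : X, (omegaIt f (k + 1))^[m + 1] z = g i (omegaIt f n z) := by
      intro z
      rw [Function.iterate_succ_apply', hg i, ← omegaIt_mul, ← hmn, omegaIt_mul_add]
    rw [key x, key y]
    exact hδ i _ _ (hd.trans_le (Finset.inf'_le _ (Finset.mem_univ i)))
  · -- autonomous proximal → nonautonomous proximal
    intro h ε hε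
    rw [frequently_atTop]
    intro N
    obtain ⟨n, hn, hd⟩ := frequently_atTop.mp (h ε hε) N
    refine ⟨(k + 1) * n, le_trans hn (Nat.le_mul_of_pos_left n (Nat.succ_pos k)), ?_⟩
    rw [omegaIt_mul, omegaIt_mul]
    exact hd
end

section
/- Let (X,d) be a compact metric space and F = {f₁,…,f_k} a finite family of continuous surjective self-maps of X, with iterates ω_n as below and f = f_k∘f_{k-1}∘⋯∘f₁. Then the non-autonomous system (X,F) is cofinitely sensitive (there exists δ>0 such that for every x∈X and every neighborhood U of x there exists K∈ℕ with diam(ω_n(U)) > δ for all n ≥ K) if and only if the autonomous system (X,f) is cofinitely sensitive (there exists δ>0 such that for every x∈X and every neighborhood U of x there exists K∈ℕ with diam(fⁿ(U)) > δ for all n ≥ K). -/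
/-!
Since `fⁿ = ω_{(k+1)n}`, cofinite sensitivity of `(X,F)` passes to the subsequence `(X,f)`.
Conversely every `n` lies at most `k+1` steps below a multiple of `k+1`, and the maps leading
from `ω_n` to `ω_{n+j}` are compositions of at most `k+1` uniformly continuous maps (`X` is
compact). Hence `diam ω_{n+j}(U) > δ` forces `diam ω_n(U) > η` for an `η > 0` depending only
on `δ`, which gives the sensitivity of `(X,F)` with constant `η`.
-/

open Filter Metric Set Function

def CofinitelySensitive {X : Type*} [PseudoMetricSpace X] (g : ℕ → X → X) : Prop :=
  ∃ δ > (0 : ℝ), ∀ x : X, ∀ U ∈ nhds x, ∃ K : ℕ, ∀ n ≥ K, δ < diam (g n '' U)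

theorem CofinitelySensitive.comp_tendsto {X : Type*} [PseudoMetricSpace X] {g : ℕ → X → X}
    (hg : CofinitelySensitive g) {φ : ℕ → ℕ} (hφ : Tendsto φ atTop atTop) :
    CofinitelySensitive (g ∘ φ) := by
  obtain ⟨δ, hδ, H⟩ := hg
  refine ⟨δ, hδ, fun x U hU => ?_⟩
  obtain ⟨K, hK⟩ := H x U hU
  obtain ⟨N, hN⟩ := eventually_atTop.1 (hφ.eventually_ge_atTop K)
  exact ⟨N, fun n hn => hK _ (hN n hn)⟩

theorem UniformContinuous.eventually_diam_image_le {X Y : Type*} [PseudoMetricSpace X]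
    [PseudoMetricSpace Y] {g : X → Y} (hg : UniformContinuous g) {ε : ℝ} (hε : 0 < ε) :
    ∀ᶠ η in nhdsWithin 0 (Ioi 0), ∀ A : Set X, Bornology.IsBounded A → diam A ≤ η →
      diam (g '' A) ≤ ε := by
  obtain ⟨d, hd, hgd⟩ := Metric.uniformContinuous_iff.1 hg ε hε
  filter_upwards [nhdsWithin_le_nhds (eventually_lt_nhds hd)] with η hη A hA hAη
  apply diam_le_of_forall_dist_le hε.le
  rintro _ ⟨a, ha, rfl⟩ _ ⟨b, hb, rfl⟩
  exact (hgd ((dist_le_diam_of_mem hA ha hb).trans_lt (hAη.trans_lt hη))).le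

section omegaIt

variable {X : Type*} {k : ℕ} (f : Fin (k + 1) → X → X)

theorem image_omegaIt_succ (n : ℕ) (U : Set X) :
    omegaIt f (n + 1) '' U =
      f ⟨n % (k + 1), Nat.mod_lt _ k.succ_pos⟩ '' (omegaIt f n '' U) := by
  rw [← image_comp]
  rfl

theorem omegaIt_add_succ (a : ℕ) (x : X) :
    omegaIt f (k + 1 + a) x = omegaIt f a (omegaIt f (k + 1) x) := by
  induction a with
  | zero => rfl
  | succ a ih =>
    show f ⟨(k + 1 + a) % (k + 1), _⟩ (omegaIt f (k + 1 + a) x) = f ⟨a % (k + 1), _⟩ _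
    simp only [ih, Nat.add_mod_left]

theorem iterate_omegaIt_succ (m : ℕ) : (omegaIt f (k + 1))^[m] = omegaIt f ((k + 1) * m) := by
  induction m with
  | zero => rfl
  | succ m ih =>
    funext x
    rw [iterate_succ_apply, ih, mul_add_one, add_comm ((k + 1) * m), omegaIt_add_succ]

variable [PseudoMetricSpace X] [CompactSpace X]

theorem eventually_lt_diam_image_omegaIt (hc : ∀ i, Continuous (f i)) {δ : ℝ} (hδ : 0 < δ)
    (j : ℕ) : ∀ᶠ η in nhdsWithin 0 (Ioi 0), ∀ n (U : Set X),
      δ < diam (omegaIt f (n + j) '' U) → η < diam (omegaIt f n '' U) := by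
  induction j with
  | zero =>
    filter_upwards [nhdsWithin_le_nhds (eventually_lt_nhds hδ)] with η hη n U hU
    exact hη.trans hU
  | succ j ih =>
    obtain ⟨ε, hε, hεpos⟩ := (ih.and self_mem_nhdsWithin).exists
    have hstep := eventually_all.2 fun i =>
      (CompactSpace.uniformContinuous_of_continuous (hc i)).eventually_diam_image_le hεpos
    filter_upwards [hstep] with η hη n U hU
    have hwide :
        ε < diam (f ⟨n % (k + 1), Nat.mod_lt _ k.succ_pos⟩ '' (omegaIt f n '' U)) := by
      rw [← image_omegaIt_succ]
      exact hε (n + 1) U (by rwa [add_right_comm])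
    by_contra! hnarrow
    exact hwide.not_ge (hη _ _ isBounded_of_compactSpace hnarrow)

theorem CofinitelySensitive.of_iterate_omegaIt (hc : ∀ i, Continuous (f i))
    (h : CofinitelySensitive fun n => (omegaIt f (k + 1))^[n]) :
    CofinitelySensitive (omegaIt f) := by
  obtain ⟨δ, hδ, H⟩ := h
  obtain ⟨η, hη, hηpos⟩ := ((eventually_all_finite (finite_Iic (k + 1))).2
    (fun j _ => eventually_lt_diam_image_omegaIt f hc hδ j) |>.and self_mem_nhdsWithin).exists
  refine ⟨η, hηpos, fun x U hU => ?_⟩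
  obtain ⟨K, hK⟩ := H x U hU
  refine ⟨(k + 1) * K, fun n hn => ?_⟩
  -- `n` lies at most `k + 1` steps below the multiple `(k + 1) * m`
  set m := n / (k + 1) + 1
  have hlt : n < (k + 1) * m := Nat.lt_mul_div_succ n k.succ_pos
  have hle : (k + 1) * (n / (k + 1)) ≤ n := Nat.mul_div_le n (k + 1)
  have hKm : K ≤ m := Nat.le_succ_of_le ((Nat.le_div_iff_mul_le k.succ_pos).2 (by linarith))
  apply hη ((k + 1) * m - n) (by simp only [mem_Iic, m]; rw [mul_add_one]; omega) n U
  rw [Nat.add_sub_cancel' hlt.le, ← iterate_omegaIt_succ]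
  exact hK m hKm

end omegaIt

theorem cofinitelySensitive_nonautonomous_iff_autonomous_general
    {X : Type*} [MetricSpace X] [CompactSpace X] {k : ℕ} (f : Fin (k + 1) → X → X)
    (hc : ∀ i, Continuous (f i)) :
    (∃ δ > (0 : ℝ), ∀ x : X, ∀ U ∈ nhds x, ∃ K : ℕ, ∀ n ≥ K,
        δ < Metric.diam (omegaIt f n '' U)) ↔
    (∃ δ > (0 : ℝ), ∀ x : X, ∀ U ∈ nhds x, ∃ K : ℕ, ∀ n ≥ K,
        δ < Metric.diam ((omegaIt f (k + 1))^[n] '' U)) := by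
  show CofinitelySensitive (omegaIt f) ↔ CofinitelySensitive fun n => (omegaIt f (k + 1))^[n]
  refine ⟨fun h => ?_, CofinitelySensitive.of_iterate_omegaIt f hc⟩
  have hmul : Tendsto (fun n => (k + 1) * n) atTop atTop :=
    tendsto_atTop_mono (fun n => Nat.le_mul_of_pos_left n k.succ_pos) tendsto_id
  convert h.comp_tendsto hmul using 1
  funext n
  exact iterate_omegaIt_succ f n

/-- the non-autonomous system `(X, F)` is cofinitely sensitive iff the
autonomous system `(X, f)`, `f = f_k ∘ ⋯ ∘ f_1`, is cofinitely sensitive. -/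
theorem cofinitelySensitive_nonautonomous_iff_autonomous
    {X : Type*} [MetricSpace X] [CompactSpace X] {k : ℕ} (f : Fin (k + 1) → X → X)
    (hc : ∀ i, Continuous (f i)) (hs : ∀ i, Function.Surjective (f i)) :
    (∃ δ > (0 : ℝ), ∀ x : X, ∀ U ∈ nhds x, ∃ K : ℕ, ∀ n ≥ K,
        δ < Metric.diam (omegaIt f n '' U)) ↔
    (∃ δ > (0 : ℝ), ∀ x : X, ∀ U ∈ nhds x, ∃ K : ℕ, ∀ n ≥ K,
        δ < Metric.diam ((omegaIt f (k + 1))^[n] '' U)) :=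
  cofinitelySensitive_nonautonomous_iff_autonomous_general f hc
end

section
/- Let (X,d) be a compact metric space and F = {f₁,…,f_k} a finite family of continuous surjective self-maps of X, with iterates ω_n as below and f = f_k∘f_{k-1}∘⋯∘f₁. Then the non-autonomous system (X,F) is Li-Yorke sensitive if and only if the autonomous system (X,f) is Li-Yorke sensitive; i.e., (there exists δ>0 such that for each x∈X and each neighborhood U of x there exists y∈U with liminf_{n→∞} d(ω_n(x),ω_n(y)) = 0 and limsup_{n→∞} d(ω_n(x),ω_n(y)) > δ) holds if and only if (there exists δ>0 such that for each x∈X and each neighborhood U of x there exists y∈U with liminf_{n→∞} d(fⁿ(x),fⁿ(y)) = 0 and limsup_{n→∞} d(fⁿ(x),fⁿ(y)) > δ). -/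
open Filter Metric Set Function

namespace LYAux

variable {X : Type*} {k : ℕ}

/-- `rseg f r s = f_{(r+s-1) % (k+1)} ∘ ⋯ ∘ f_{r % (k+1)}`, the segment of maps applied
between steps `r` and `r + s`. -/
def rseg (f : Fin (k + 1) → X → X) (r : ℕ) : ℕ → X → X
  | 0 => id
  | s + 1 => fun x => f ⟨(r + s) % (k + 1), Nat.mod_lt _ (Nat.succ_pos k)⟩ (rseg f r s x)

lemma omega_add (f : Fin (k + 1) → X → X) (n s : ℕ) (x : X) :
    omegaIt f (n + s) x = rseg f n s (omegaIt f n x) := by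
  induction s with
  | zero => rfl
  | succ s ih =>
      show f _ (omegaIt f (n + s) x) = f _ (rseg f n s (omegaIt f n x))
      rw [ih]
      rfl

lemma rseg_mod (f : Fin (k + 1) → X → X) (r s : ℕ) (x : X) :
    rseg f r s x = rseg f (r % (k + 1)) s x := by
  induction s with
  | zero => rfl
  | succ s ih =>
      show f ⟨(r + s) % (k + 1), _⟩ (rseg f r s x)
        = f ⟨(r % (k + 1) + s) % (k + 1), _⟩ (rseg f (r % (k + 1)) s x)
      rw [ih]
      congr 1
      exact Fin.ext (Nat.mod_add_mod r (k + 1) s).symm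

lemma rseg_zero (f : Fin (k + 1) → X → X) (s : ℕ) (x : X) :
    rseg f 0 s x = omegaIt f s x := by
  induction s with
  | zero => rfl
  | succ s ih =>
      show f ⟨(0 + s) % (k + 1), _⟩ (rseg f 0 s x) = f ⟨s % (k + 1), _⟩ (omegaIt f s x)
      rw [ih]
      congr 1
      exact Fin.ext (by simp)

lemma rseg_continuous [TopologicalSpace X] (f : Fin (k + 1) → X → X)
    (hc : ∀ i, Continuous (f i)) (r s : ℕ) : Continuous (rseg f r s) := by
  induction s with
  | zero => exact continuous_id
  | succ s ih => exact (hc _).comp ih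

lemma omega_block (f : Fin (k + 1) → X → X) (m : ℕ) (x : X) :
    omegaIt f ((k + 1) * m) x = (omegaIt f (k + 1))^[m] x := by
  induction m with
  | zero => rfl
  | succ m ih =>
      have h1 : (k + 1) * (m + 1) = (k + 1) * m + (k + 1) := by ring
      rw [h1, omega_add, rseg_mod, Nat.mul_mod_right, rseg_zero, ih,
        Function.iterate_succ_apply']

lemma omega_decomp (f : Fin (k + 1) → X → X) (n : ℕ) (x : X) :
    omegaIt f n x = rseg f 0 (n % (k + 1)) ((omegaIt f (k + 1))^[n / (k + 1)] x) := by
  conv_lhs => rw [← Nat.div_add_mod n (k + 1)]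
  rw [omega_add, rseg_mod, Nat.mul_mod_right, omega_block]

lemma iter_decomp (f : Fin (k + 1) → X → X) (n : ℕ) (x : X) :
    (omegaIt f (k + 1))^[n / (k + 1) + 1] x
      = rseg f (n % (k + 1)) (k + 1 - n % (k + 1)) (omegaIt f n x) := by
  have h2 : n % (k + 1) < k + 1 := Nat.mod_lt _ (Nat.succ_pos k)
  have h : (k + 1) * (n / (k + 1) + 1) = n + (k + 1 - n % (k + 1)) := by
    have h1 := Nat.div_add_mod n (k + 1)
    have h3 : (k + 1) * (n / (k + 1) + 1) = (k + 1) * (n / (k + 1)) + (k + 1) := by ring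
    omega
  rw [← omega_block, h, omega_add, rseg_mod f n]

lemma unif_family {X : Type*} [MetricSpace X] [CompactSpace X] (g : ℕ → X → X)
    (hg : ∀ r, Continuous (g r)) (m : ℕ) {η : ℝ} (hη : 0 < η) :
    ∃ ε > 0, ∀ r < m, ∀ a b : X, dist a b < ε → dist (g r a) (g r b) < η := by
  induction m with
  | zero => exact ⟨1, one_pos, fun r hr => absurd hr (Nat.not_lt_zero r)⟩
  | succ m ih =>
      obtain ⟨ε₁, hε₁, h₁⟩ := ih
      obtain ⟨ε₂, hε₂, h₂⟩ :=
        Metric.uniformContinuous_iff.mp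
          (CompactSpace.uniformContinuous_of_continuous (hg m)) η hη
      refine ⟨min ε₁ ε₂, lt_min hε₁ hε₂, fun r hr a b hab => ?_⟩
      rcases Nat.lt_succ_iff_lt_or_eq.mp hr with h | h
      · exact h₁ r h a b (hab.trans_le (min_le_left _ _))
      · subst h; exact h₂ (hab.trans_le (min_le_right _ _))

lemma freq_comp {u : ℕ → ℕ} (hu : Tendsto u atTop atTop) {P : ℕ → Prop}
    (h : ∃ᶠ n in atTop, P (u n)) : ∃ᶠ m in atTop, P m :=
  (Filter.frequently_map.mpr h).filter_mono hu

lemma tendsto_div_k (k : ℕ) : Tendsto (fun n : ℕ => n / (k + 1)) atTop atTop :=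
  Filter.tendsto_atTop.2 fun b => Filter.eventually_atTop.2
    ⟨b * (k + 1), fun n hn => (Nat.le_div_iff_mul_le (Nat.succ_pos k)).2 hn⟩

lemma tendsto_div_k' (k : ℕ) : Tendsto (fun n : ℕ => n / (k + 1) + 1) atTop atTop :=
  Filter.tendsto_atTop.2 fun b => Filter.eventually_atTop.2
    ⟨b * (k + 1), fun n hn =>
      le_trans ((Nat.le_div_iff_mul_le (Nat.succ_pos k)).2 hn) (Nat.le_succ _)⟩

end LYAux

open LYAux

/-- the non-autonomous system `(X, F)` is Li-Yorke sensitive iff the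
autonomous system `(X, f)`, `f = f_k ∘ ⋯ ∘ f_1`, is Li-Yorke sensitive. -/
theorem liYorkeSensitive_nonautonomous_iff_autonomous
    {X : Type*} [MetricSpace X] [CompactSpace X] {k : ℕ} (f : Fin (k + 1) → X → X)
    (hc : ∀ i, Continuous (f i)) (hs : ∀ i, Function.Surjective (f i)) :
    (∃ δ > (0 : ℝ), ∀ x : X, ∀ U ∈ nhds x, ∃ y ∈ U,
        Filter.liminf (fun n : ℕ => dist (omegaIt f n x) (omegaIt f n y)) Filter.atTop = 0 ∧
        δ < Filter.limsup (fun n : ℕ => dist (omegaIt f n x) (omegaIt f n y)) Filter.atTop) ↔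
    (∃ δ > (0 : ℝ), ∀ x : X, ∀ U ∈ nhds x, ∃ y ∈ U,
        Filter.liminf (fun n : ℕ =>
          dist ((omegaIt f (k + 1))^[n] x) ((omegaIt f (k + 1))^[n] y)) Filter.atTop = 0 ∧
        δ < Filter.limsup (fun n : ℕ =>
          dist ((omegaIt f (k + 1))^[n] x) ((omegaIt f (k + 1))^[n] y)) Filter.atTop) := by
  obtain ⟨C, hC⟩ : ∃ C : ℝ, ∀ a b : X, dist a b ≤ C := by
    obtain ⟨C, hC⟩ := Metric.isBounded_iff.mp (isCompact_univ (X := X)).isBounded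
    exact ⟨C, fun a b => hC (mem_univ a) (mem_univ b)⟩
  have hbdd : ∀ a b : ℕ → X, IsBoundedUnder (· ≤ ·) atTop
      (fun n => dist (a n) (b n)) :=
    fun a b => isBoundedUnder_of ⟨C, fun n => hC _ _⟩
  have hbdd0 : ∀ a b : ℕ → X, IsBoundedUnder (· ≥ ·) atTop
      (fun n => dist (a n) (b n)) :=
    fun a b => isBoundedUnder_of ⟨0, fun n => dist_nonneg⟩
  constructor
  · rintro ⟨δ, hδ, H⟩
    obtain ⟨ε, hε, hεspec⟩ :=
      unif_family (fun r => rseg f 0 r) (fun r => rseg_continuous f hc 0 r) (k + 1) hδ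
    refine ⟨ε / 2, by positivity, fun x U hU => ?_⟩
    obtain ⟨y, hy, hli, hls⟩ := H x U hU
    refine ⟨y, hy, ?_, ?_⟩
    · -- liminf for autonomous system is 0
      refine le_antisymm ?_ (le_liminf_of_le
        ((hbdd (fun n => (omegaIt f (k + 1))^[n] x) (fun n => (omegaIt f (k + 1))^[n] y)).isCoboundedUnder_ge)
        (Eventually.of_forall fun n => dist_nonneg))
      refine le_of_forall_pos_le_add fun η hη => ?_
      rw [zero_add]
      obtain ⟨ε', hε', hspec'⟩ :=
        unif_family (fun r => rseg f r (k + 1 - r))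
          (fun r => rseg_continuous f hc r (k + 1 - r)) (k + 1) hη
      have hfr : ∃ᶠ n in atTop, dist (omegaIt f n x) (omegaIt f n y) < ε' :=
        frequently_lt_of_liminf_lt
          ((hbdd (fun n => omegaIt f n x) (fun n => omegaIt f n y)).isCoboundedUnder_ge)
          (hli ▸ hε')
      have hfr2 : ∃ᶠ n in atTop,
          dist ((omegaIt f (k + 1))^[n / (k + 1) + 1] x)
            ((omegaIt f (k + 1))^[n / (k + 1) + 1] y) < η := by
        refine hfr.mono fun n hn => ?_
        rw [iter_decomp, iter_decomp]
        exact hspec' (n % (k + 1)) (Nat.mod_lt _ (Nat.succ_pos k)) _ _ hn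
      have hfr3 := freq_comp (tendsto_div_k' k)
        (P := fun m => dist ((omegaIt f (k + 1))^[m] x) ((omegaIt f (k + 1))^[m] y) < η) hfr2
      exact liminf_le_of_frequently_le (hfr3.mono fun m hm => hm.le)
        (hbdd0 (fun n => (omegaIt f (k + 1))^[n] x) (fun n => (omegaIt f (k + 1))^[n] y))
    · -- limsup for autonomous system exceeds ε / 2
      have hfr : ∃ᶠ n in atTop, δ < dist (omegaIt f n x) (omegaIt f n y) :=
        frequently_lt_of_lt_limsup
          ((hbdd0 (fun n => omegaIt f n x) (fun n => omegaIt f n y)).isCoboundedUnder_le) hls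
      have hfr2 : ∃ᶠ n in atTop,
          ε ≤ dist ((omegaIt f (k + 1))^[n / (k + 1)] x)
            ((omegaIt f (k + 1))^[n / (k + 1)] y) := by
        refine hfr.mono fun n hn => ?_
        by_contra h
        push_neg at h
        have h2 := hεspec (n % (k + 1)) (Nat.mod_lt _ (Nat.succ_pos k)) _ _ h
        rw [← omega_decomp, ← omega_decomp] at h2
        exact absurd hn (not_lt.mpr h2.le)
      have hfr3 := freq_comp (tendsto_div_k k)
        (P := fun m => ε ≤ dist ((omegaIt f (k + 1))^[m] x) ((omegaIt f (k + 1))^[m] y)) hfr2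
      calc ε / 2 < ε := half_lt_self hε
        _ ≤ _ := le_limsup_of_frequently_le hfr3
            (hbdd (fun n => (omegaIt f (k + 1))^[n] x) (fun n => (omegaIt f (k + 1))^[n] y))
  · rintro ⟨δ, hδ, H⟩
    refine ⟨δ, hδ, fun x U hU => ?_⟩
    obtain ⟨y, hy, hli, hls⟩ := H x U hU
    have hsubseq : ∀ n : ℕ, dist (omegaIt f ((k + 1) * n) x) (omegaIt f ((k + 1) * n) y)
        = dist ((omegaIt f (k + 1))^[n] x) ((omegaIt f (k + 1))^[n] y) := by
      intro n; rw [omega_block, omega_block]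
    refine ⟨y, hy, ?_, ?_⟩
    · -- liminf for non-autonomous system is 0
      refine le_antisymm ?_ (le_liminf_of_le
        ((hbdd (fun n => omegaIt f n x) (fun n => omegaIt f n y)).isCoboundedUnder_ge)
        (Eventually.of_forall fun n => dist_nonneg))
      refine le_of_forall_pos_le_add fun η hη => ?_
      rw [zero_add]
      have hfr : ∃ᶠ n in atTop,
          dist ((omegaIt f (k + 1))^[n] x) ((omegaIt f (k + 1))^[n] y) < η :=
        frequently_lt_of_liminf_lt
          ((hbdd (fun n => (omegaIt f (k + 1))^[n] x) (fun n => (omegaIt f (k + 1))^[n] y)).isCoboundedUnder_ge)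
          (hli ▸ hη)
      have hfr2 : ∃ᶠ n in atTop, dist (omegaIt f n x) (omegaIt f n y) < η := by
        rw [Filter.frequently_atTop] at hfr ⊢
        intro N
        obtain ⟨m, hm, hmlt⟩ := hfr N
        refine ⟨(k + 1) * m, le_trans hm (Nat.le_mul_of_pos_left m (Nat.succ_pos k)), ?_⟩
        rw [hsubseq]; exact hmlt
      exact liminf_le_of_frequently_le (hfr2.mono fun m hm => hm.le)
        (hbdd0 (fun n => omegaIt f n x) (fun n => omegaIt f n y))
    · -- limsup for non-autonomous system exceeds δ
      obtain ⟨δ'', hδ''₁, hδ''₂⟩ := exists_between hls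
      have hfr : ∃ᶠ n in atTop,
          δ'' < dist ((omegaIt f (k + 1))^[n] x) ((omegaIt f (k + 1))^[n] y) :=
        frequently_lt_of_lt_limsup
          ((hbdd0 (fun n => (omegaIt f (k + 1))^[n] x) (fun n => (omegaIt f (k + 1))^[n] y)).isCoboundedUnder_le)
          hδ''₂
      have hfr2 : ∃ᶠ n in atTop, δ'' ≤ dist (omegaIt f n x) (omegaIt f n y) := by
        rw [Filter.frequently_atTop] at hfr ⊢
        intro N
        obtain ⟨m, hm, hmlt⟩ := hfr N
        refine ⟨(k + 1) * m, le_trans hm (Nat.le_mul_of_pos_left m (Nat.succ_pos k)), ?_⟩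
        rw [hsubseq]; exact hmlt.le
      calc δ < δ'' := hδ''₁
        _ ≤ _ := le_limsup_of_frequently_le hfr2
            (hbdd (fun n => omegaIt f n x) (fun n => omegaIt f n y))
end
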